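/- For positive reals x ≠ y, the shifted harmonic mean H_{x,y}(t) = 2/((1/(x+t)) + (1/(y+t))) is a Bernstein function of t on (-min{x,y}, ∞), i.e., it is nonnegative and its derivative is completely monotonic. -/

import Mathlib

open Filter Set

/-- Key computation: iterated derivatives of `c * (a + 2s)^(-k-1)` away from the pole. -/
lemma harmonic_aux (a : ℝ) : ∀ (n k : ℕ) (c t : ℝ), a + 2 * t ≠ 0 →
    iteratedDeriv n (fun s : ℝ => c * (a + 2 * s) ^ (-(k : ℤ) - 1)) t
      = c * (-2) ^ n * (∏ i ∈ Finset.range n, ((k : ℝ) + 1 + i)) *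
        (a + 2 * t) ^ (-(k : ℤ) - 1 - n) := by
  intro n
  induction n with
  | zero => intro k c t ht; simp
  | succ n ih =>
    intro k c t ht
    rw [iteratedDeriv_succ']
    have hopen : IsOpen {s : ℝ | a + 2 * s ≠ 0} :=
      isOpen_ne.preimage (by continuity)
    have hmem : {s : ℝ | a + 2 * s ≠ 0} ∈ nhds t := hopen.mem_nhds ht
    have hev : (deriv fun s : ℝ => c * (a + 2 * s) ^ (-(k : ℤ) - 1)) =ᶠ[nhds t]
        (fun s : ℝ => (c * (-2) * ((k : ℝ) + 1)) * (a + 2 * s) ^ (-((k + 1 : ℕ) : ℤ) - 1)) := by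
      filter_upwards [hmem] with s hs
      have h1 : HasDerivAt (fun s : ℝ => a + 2 * s) 2 s := by
        simpa using ((hasDerivAt_id s).const_mul 2).const_add a
      have h2 := (hasDerivAt_zpow (-(k : ℤ) - 1) (a + 2 * s) (Or.inl hs)).comp s h1
      simp only [Function.comp_def] at h2
      rw [(h2.const_mul c).deriv]
      rw [show (-(k : ℤ) - 1 - 1) = -((k + 1 : ℕ) : ℤ) - 1 by push_cast; ring]
      push_cast
      ring
    rw [hev.iteratedDeriv_eq n, ih (k + 1) _ t ht]
    have hexp : -((k + 1 : ℕ) : ℤ) - 1 - (n : ℤ) = -(k : ℤ) - 1 - ((n + 1 : ℕ) : ℤ) := by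
      push_cast; ring
    rw [hexp, Finset.prod_range_succ']
    have hprodeq : (∏ i ∈ Finset.range n, (((k + 1 : ℕ) : ℝ) + 1 + i))
        = ∏ i ∈ Finset.range n, ((k : ℝ) + 1 + ((i + 1 : ℕ) : ℝ)) :=
      Finset.prod_congr rfl fun i _ => by push_cast; ring
    rw [hprodeq]
    push_cast
    ring

/-- The shifted harmonic mean `H_{x,y}(t) = 2/((1/(x+t)) + (1/(y+t)))` is a Bernstein
function on `(-min x y, ∞)`: nonnegative with completely monotonic derivative. -/
theorem harmonic_mean_bernstein (x y : ℝ) (hx : 0 < x) (hy : 0 < y) (hxy : x ≠ y) :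
    (∀ t ∈ Set.Ioi (-(min x y)), 0 ≤ 2 / (1 / (x + t) + 1 / (y + t))) ∧
    (∀ n : ℕ, ∀ t ∈ Set.Ioi (-(min x y)),
      0 ≤ (-1 : ℝ) ^ n *
        iteratedDeriv n (deriv (fun t : ℝ => 2 / (1 / (x + t) + 1 / (y + t)))) t) := by
  set a := x + y with ha
  set c := (x - y) ^ 2 with hc
  -- basic positivity facts on the domain
  have hpos : ∀ s ∈ Set.Ioi (-(min x y)), 0 < x + s ∧ 0 < y + s ∧ 0 < a + 2 * s := by
    intro s hs
    have h1 : -(min x y) < s := hs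
    have hxs : 0 < x + s := by
      have : min x y ≤ x := min_le_left x y
      linarith
    have hys : 0 < y + s := by
      have : min x y ≤ y := min_le_right x y
      linarith
    exact ⟨hxs, hys, by rw [ha]; linarith⟩
  constructor
  · intro t ht
    obtain ⟨h1, h2, h3⟩ := hpos t ht
    positivity
  · intro n t ht
    obtain ⟨hxt, hyt, hat⟩ := hpos t ht
    -- the derivative of f agrees with `1 + c * (a+2s)^(-2)` near t
    have hopen : IsOpen (Set.Ioi (-(min x y))) := isOpen_Ioi
    have hmem : Set.Ioi (-(min x y)) ∈ nhds t := hopen.mem_nhds ht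
    have hderiv : ∀ s ∈ Set.Ioi (-(min x y)),
        deriv (fun t : ℝ => 2 / (1 / (x + t) + 1 / (y + t))) s
          = 1 + c * ((a + 2 * s) ^ 2)⁻¹ := by
      intro s hs
      obtain ⟨hxs, hys, has⟩ := hpos s hs
      have hfg : (fun t : ℝ => 2 / (1 / (x + t) + 1 / (y + t))) =ᶠ[nhds s]
          (fun s : ℝ => s + a / 2 - (c / 2) * (a + 2 * s)⁻¹) := by
        filter_upwards [hopen.mem_nhds hs] with u hu
        obtain ⟨hxu, hyu, hau⟩ := hpos u hu
        rw [ha, hc]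
        have hau' : x + y + 2 * u ≠ 0 := by linarith
        field_simp
        ring
      rw [hfg.deriv_eq]
      have h1 : HasDerivAt (fun u : ℝ => a + 2 * u) 2 s := by
        simpa using ((hasDerivAt_id s).const_mul 2).const_add a
      have h2 : HasDerivAt (fun u : ℝ => (a + 2 * u)⁻¹) (-2 / (a + 2 * s) ^ 2) s :=
        h1.inv has.ne'
      have h3 : HasDerivAt (fun u : ℝ => u + a / 2 - (c / 2) * (a + 2 * u)⁻¹)
          (1 - (c / 2) * (-2 / (a + 2 * s) ^ 2)) s :=
        ((hasDerivAt_id s).add_const (a / 2)).sub (h2.const_mul (c / 2))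
      rw [h3.deriv]
      field_simp
      ring
    have hev : (deriv (fun t : ℝ => 2 / (1 / (x + t) + 1 / (y + t)))) =ᶠ[nhds t]
        (fun s : ℝ => 1 + c * ((a + 2 * s) ^ 2)⁻¹) := by
      filter_upwards [hmem] with s hs using hderiv s hs
    rw [hev.iteratedDeriv_eq n]
    have hc0 : 0 ≤ c := sq_nonneg _
    cases n with
    | zero =>
      simp only [iteratedDeriv_zero, pow_zero, one_mul]
      have : 0 < ((a + 2 * t) ^ 2)⁻¹ := by positivity
      nlinarith
    | succ m =>
      rw [iteratedDeriv_succ']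
      have heq : (deriv fun s : ℝ => 1 + c * ((a + 2 * s) ^ 2)⁻¹)
          = deriv (fun s : ℝ => c * (a + 2 * s) ^ (-((1 : ℕ) : ℤ) - 1)) := by
        have hfun : (fun s : ℝ => 1 + c * ((a + 2 * s) ^ 2)⁻¹)
            = (fun s : ℝ => 1 + c * (a + 2 * s) ^ (-((1 : ℕ) : ℤ) - 1)) := by
          funext s
          have : ((a + 2 * s) : ℝ) ^ (-((1 : ℕ) : ℤ) - 1) = ((a + 2 * s) ^ 2)⁻¹ := by
            rw [show (-((1 : ℕ) : ℤ) - 1) = -(2 : ℤ) by norm_num, zpow_neg, zpow_two, sq]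
          rw [this]
        rw [hfun]
        exact deriv_const_add' 1
      rw [heq, ← iteratedDeriv_succ']
      rw [harmonic_aux a (m + 1) 1 c t hat.ne']
      set P := ∏ i ∈ Finset.range (m + 1), (((1 : ℕ) : ℝ) + 1 + i) with hPdef
      set X := (a + 2 * t) ^ (-((1 : ℕ) : ℤ) - 1 - ((m + 1 : ℕ) : ℤ)) with hXdef
      have hP : (0 : ℝ) ≤ P := Finset.prod_nonneg fun i _ => by positivity
      have hX : (0 : ℝ) < X := zpow_pos hat _
      calc (0 : ℝ) ≤ (((-1 : ℝ) ^ (m + 1)) ^ 2) * (c * 2 ^ (m + 1) * P * X) :=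
            mul_nonneg (sq_nonneg _)
              (mul_nonneg (mul_nonneg (mul_nonneg hc0 (by positivity)) hP) hX.le)
        _ = (-1 : ℝ) ^ (m + 1) * (c * (-2) ^ (m + 1) * P * X) := by
            rw [show ((-2 : ℝ)) = (-1) * 2 by norm_num, mul_pow]
            ring
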